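/- Let κ be a cardinal and let c : κ × ℕ × ℕ → 2 be a tortuous coloring. Then for every infinite A ⊆ ℕ there exists α < κ such that for every n < ω and every σ : {0,…,n} → 2 there are infinitely many k ∈ A with σ(i) = c(α, k, i) for all i ≤ n. -/

import Mathlib

open Filter Set Cardinal

/-- A coloring `c : α × ℕ × ℕ → 2` is tortuous if for every infinite `A ⊆ ℕ` and every
partition of `α` into countably many (possibly empty) pieces, coded by `K : α → ℕ`,
there is `n` such that for every `σ : {0,…,n} → 2` there are `x` in the `n`-th piece
and `k ∈ A` with `k > n` and `σ i = c x k i` for all `i ≤ n`. -/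
def TortuousColoring {α : Type} (c : α → ℕ → ℕ → Bool) : Prop :=
  ∀ A : Set ℕ, A.Infinite → ∀ K : α → ℕ, ∃ n : ℕ, ∀ σ : ℕ → Bool,
    ∃ x : α, K x = n ∧ ∃ k ∈ A, k > n ∧ ∀ i ≤ n, σ i = c x k i

/-- For a tortuous coloring `c` and any infinite `A ⊆ ℕ`, there is `α` such that for all
`n` and `σ : {0,…,n} → 2`, infinitely many `k ∈ A` satisfy `σ i = c α k i` for all `i ≤ n`. -/
theorem stmt7 {α : Type} (c : α → ℕ → ℕ → Bool) (hc : TortuousColoring c)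
    (A : Set ℕ) (hA : A.Infinite) :
    ∃ x : α, ∀ (n : ℕ) (σ : ℕ → Bool),
      {k : ℕ | k ∈ A ∧ ∀ i ≤ n, σ i = c x k i}.Infinite := by
  by_contra h
  push_neg at h
  choose n σ hfin using h
  have hb : ∀ x : α, ∃ m : ℕ, ∀ k ∈ {k : ℕ | k ∈ A ∧ ∀ i ≤ n x, σ x i = c x k i}, k ≤ m := by
    intro x
    obtain ⟨m, hm⟩ := (hfin x).bddAbove
    exact ⟨m, fun k hk => hm hk⟩
  choose m hm using hb
  set K : α → ℕ := fun x =>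
    Nat.pair (n x) (Nat.pair (m x) (Encodable.encode ((List.range (n x + 1)).map (σ x)))) with hK
  obtain ⟨N, hN⟩ := hc A hA K
  set L : List Bool :=
    ((Encodable.decode (N.unpair.2.unpair.2) : Option (List Bool)).getD []) with hL
  obtain ⟨x, hKx, k, hkA, hkN, hmatch⟩ := hN (fun i => L.getD i false)
  have h1 : N.unpair.1 = n x := by rw [← hKx]; simp [hK]
  have h2 : N.unpair.2.unpair.1 = m x := by rw [← hKx]; simp [hK]
  have h3 : N.unpair.2.unpair.2 = Encodable.encode ((List.range (n x + 1)).map (σ x)) := by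
    rw [← hKx]; simp [hK]
  have hLval : L = (List.range (n x + 1)).map (σ x) := by
    rw [hL, h3, Encodable.encodek]
    rfl
  have hnN : n x ≤ N := by rw [← hKx]; exact Nat.left_le_pair _ _
  have hmN : m x ≤ N := by
    rw [← hKx]
    exact le_trans (Nat.left_le_pair _ _) (Nat.right_le_pair _ _)
  have hkmem : k ∈ {k : ℕ | k ∈ A ∧ ∀ i ≤ n x, σ x i = c x k i} := by
    refine ⟨hkA, fun i hi => ?_⟩
    have hiN : i ≤ N := le_trans hi hnN
    have := hmatch i hiN
    have hget : L.getD i false = σ x i := by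
      rw [hLval]
      have hlen : i < ((List.range (n x + 1)).map (σ x)).length := by
        simp; omega
      rw [List.getD_eq_getElem _ _ hlen]
      simp
    rw [← this, hget]
  have := hm x k hkmem
  omega
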